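/- Under the model where R, R' are conditionally independent Bernoulli given X with common logistic selection probability logistic(ψ₀+ψ₁x) and X | R=1, R'=1 ~ N(μ,σ²), define δ_R = E[X|R=1,R'=1] − E[X|R=1,R'=0] and δ_NR = E[X|R=0,R'=1] − E[X|R=0,R'=0]. Then δ_R = δ_NR = ψ₁σ². -/

import Mathlib

open MeasureTheory Real

noncomputable def normalPDF (μ σ2 x : ℝ) : ℝ :=
  (Real.sqrt (2 * Real.pi * σ2))⁻¹ * Real.exp (-(x - μ)^2 / (2 * σ2))

noncomputable def logisticSel (ψ0 ψ1 x : ℝ) : ℝ :=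
  Real.exp (ψ0 + ψ1 * x) / (1 + Real.exp (ψ0 + ψ1 * x))

noncomputable def selWeight (ψ0 ψ1 : ℝ) (r x : ℝ) : ℝ :=
  if r = 1 then logisticSel ψ0 ψ1 x else 1 - logisticSel ψ0 ψ1 x

lemma normalPDF_eq_gaussian (μ : ℝ) {σ2 : ℝ} (hσ2 : 0 < σ2) :
    normalPDF μ σ2 = ProbabilityTheory.gaussianPDFReal μ ⟨σ2, hσ2.le⟩ := by
  funext x
  simp [normalPDF, ProbabilityTheory.gaussianPDFReal, neg_div]
  rfl

lemma integral_normalPDF {σ2 : ℝ} (μ : ℝ) (hσ2 : 0 < σ2) :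
    ∫ x, normalPDF μ σ2 x = 1 := by
  rw [show (fun x => normalPDF μ σ2 x) = normalPDF μ σ2 from rfl,
    normalPDF_eq_gaussian μ hσ2]
  exact ProbabilityTheory.integral_gaussianPDFReal_eq_one μ (by
    intro h
    apply hσ2.ne'
    exact congrArg NNReal.toReal h)

lemma integrable_normalPDF {σ2 : ℝ} (μ : ℝ) (hσ2 : 0 < σ2) :
    Integrable (normalPDF μ σ2) := by
  rw [normalPDF_eq_gaussian μ hσ2]
  exact ProbabilityTheory.integrable_gaussianPDFReal μ _

lemma integrable_id_mul_normalPDF {σ2 : ℝ} (μ : ℝ) (hσ2 : 0 < σ2) :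
    Integrable (fun x => x * normalPDF μ σ2 x) := by
  have hb : 0 < (2 * σ2)⁻¹ := by positivity
  have h1 : Integrable (fun x : ℝ => x * Real.exp (-(2*σ2)⁻¹ * x ^ 2)) := by
    have := integrable_rpow_mul_exp_neg_mul_sq hb (s := 1) (by norm_num)
    simpa [Real.rpow_one] using this
  have h2 : Integrable (fun x : ℝ =>
      (Real.sqrt (2 * Real.pi * σ2))⁻¹ * ((x + μ) * Real.exp (-(2*σ2)⁻¹ * x ^ 2))) := by
    apply Integrable.const_mul
    have : (fun x : ℝ => (x + μ) * Real.exp (-(2*σ2)⁻¹ * x ^ 2))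
        = fun x : ℝ => x * Real.exp (-(2*σ2)⁻¹ * x ^ 2)
            + μ * Real.exp (-(2*σ2)⁻¹ * x ^ 2) := by
      funext x; ring
    rw [this]
    exact h1.add ((integrable_exp_neg_mul_sq hb).const_mul μ)
  have h3 := h2.comp_sub_right μ
  apply h3.congr
  filter_upwards with x
  have hx : x - μ + μ = x := by ring
  have he : -(2*σ2)⁻¹ * (x - μ) ^ 2 = -(x - μ)^2 / (2 * σ2) := by
    field_simp
  simp only [hx, he, normalPDF]
  ring

lemma integral_id_mul_normalPDF_zero {σ2 : ℝ} (hσ2 : 0 < σ2) :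
    ∫ x, x * normalPDF 0 σ2 x = 0 := by
  have h := integral_neg_eq_self (fun x => x * normalPDF 0 σ2 x) (volume : Measure ℝ)
  have h2 : ∫ x, (-x) * normalPDF 0 σ2 (-x) = ∫ x, -(x * normalPDF 0 σ2 x) := by
    congr 1; funext x
    have : normalPDF 0 σ2 (-x) = normalPDF 0 σ2 x := by
      simp [normalPDF, neg_sub, sub_zero]
    rw [this]; ring
  rw [h2, integral_neg] at h
  linarith

lemma integral_id_mul_normalPDF {σ2 : ℝ} (μ : ℝ) (hσ2 : 0 < σ2) :
    ∫ x, x * normalPDF μ σ2 x = μ := by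
  have hshift : ∀ x : ℝ, normalPDF μ σ2 (x + μ) = normalPDF 0 σ2 x := by
    intro x; simp [normalPDF]
  have h := integral_add_right_eq_self (μ := (volume : Measure ℝ))
    (fun x => x * normalPDF μ σ2 x) μ
  rw [← h]
  rw [show (fun x => (x + μ) * normalPDF μ σ2 (x + μ))
      = fun x => x * normalPDF 0 σ2 x + μ * normalPDF 0 σ2 x by
    funext x; rw [hshift]; ring]
  rw [integral_add (integrable_id_mul_normalPDF 0 hσ2)
    ((integrable_normalPDF 0 hσ2).const_mul μ)]
  rw [integral_id_mul_normalPDF_zero hσ2, integral_const_mul,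
    integral_normalPDF 0 hσ2]
  ring

/-- Exponential tilting of the normal density. -/
lemma tilt_normalPDF {σ2 : ℝ} (hσ2 : 0 < σ2) (μ a b x : ℝ) :
    Real.exp (a + b * x) * normalPDF μ σ2 x
      = Real.exp (a + b * μ + b^2 * σ2 / 2) * normalPDF (μ + b * σ2) σ2 x := by
  simp only [normalPDF]
  have hexp : (a + b*x) + (-(x-μ)^2/(2*σ2))
      = (a + b*μ + b^2*σ2/2) + (-(x-(μ+b*σ2))^2/(2*σ2)) := by
    field_simp; ring
  calc Real.exp (a + b * x)
        * ((Real.sqrt (2 * Real.pi * σ2))⁻¹ * Real.exp (-(x-μ)^2/(2*σ2)))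
      = (Real.sqrt (2 * Real.pi * σ2))⁻¹
          * Real.exp ((a + b*x) + (-(x-μ)^2/(2*σ2))) := by
        rw [Real.exp_add (a + b*x) (-(x-μ)^2/(2*σ2))]; ring
    _ = (Real.sqrt (2 * Real.pi * σ2))⁻¹
          * Real.exp ((a + b*μ + b^2*σ2/2) + (-(x-(μ+b*σ2))^2/(2*σ2))) := by rw [hexp]
    _ = Real.exp (a + b * μ + b ^ 2 * σ2 / 2)
          * ((Real.sqrt (2 * Real.pi * σ2))⁻¹
            * Real.exp (-(x-(μ+b*σ2))^2/(2*σ2))) := by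
        rw [Real.exp_add (a + b*μ + b^2*σ2/2) (-(x-(μ+b*σ2))^2/(2*σ2))]; ring

/-- If `g = c • normalPDF m' σ2` pointwise with `c ≠ 0`, then `∫ g = c` and the
normalized mean is `m'`. -/
lemma mean_of_tilt {g : ℝ → ℝ} {c m' σ2 : ℝ} (hσ2 : 0 < σ2) (hc : c ≠ 0)
    (hg : ∀ x, g x = c * normalPDF m' σ2 x) :
    (∫ x, g x) = c ∧ (∫ x, x * (g x / (∫ x, g x))) = m' := by
  have h1 : (∫ x, g x) = c := by
    rw [show (fun x => g x) = fun x => c * normalPDF m' σ2 x from funext hg,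
      integral_const_mul, integral_normalPDF m' hσ2, mul_one]
  refine ⟨h1, ?_⟩
  rw [h1]
  rw [show (fun x => x * (g x / c)) = fun x => x * normalPDF m' σ2 x by
    funext x; rw [hg x, mul_comm c, mul_div_assoc, div_self hc, mul_one]]
  exact integral_id_mul_normalPDF m' hσ2

/-- `δ_R = E[X|R=1,R'=1] − E[X|R=1,R'=0]` and
`δ_NR = E[X|R=0,R'=1] − E[X|R=0,R'=0]` both equal `ψ₁σ²`. -/
theorem delta_R_eq_delta_NR
    (f : ℝ → ℝ) (μ σ2 ψ0 ψ1 : ℝ) (hσ2 : 0 < σ2)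
    (hf_nonneg : ∀ x, 0 ≤ f x) (hf_meas : Measurable f) (hInt : Integrable f)
    (P : ℝ → ℝ → ℝ)
    (hP : ∀ r r', P r r' = ∫ x, selWeight ψ0 ψ1 r x * selWeight ψ0 ψ1 r' x * f x)
    (hPpos : ∀ r r', (r = 0 ∨ r = 1) → (r' = 0 ∨ r' = 1) → 0 < P r r')
    (hcond11 : ∀ x,
      selWeight ψ0 ψ1 1 x * selWeight ψ0 ψ1 1 x * f x / P 1 1 = normalPDF μ σ2 x)
    (m : ℝ → ℝ → ℝ)
    (hm : ∀ r r', m r r' =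
      ∫ x, x * (selWeight ψ0 ψ1 r x * selWeight ψ0 ψ1 r' x * f x / P r r')) :
    m 1 1 - m 1 0 = ψ1 * σ2 ∧ m 0 1 - m 0 0 = ψ1 * σ2 := by
  set p : ℝ → ℝ := fun x => logisticSel ψ0 ψ1 x with hp
  have hsel1 : ∀ x, selWeight ψ0 ψ1 1 x = p x := fun x => if_pos rfl
  have hsel0 : ∀ x, selWeight ψ0 ψ1 0 x = 1 - p x := fun x => if_neg (by norm_num)
  have hP11pos : 0 < P 1 1 := hPpos 1 1 (Or.inr rfl) (Or.inr rfl)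
  have h1p : ∀ x, 1 - p x = Real.exp (-ψ0 + -ψ1 * x) * p x := by
    intro x
    have hd : (0:ℝ) < 1 + Real.exp (ψ0 + ψ1 * x) := by positivity
    simp only [hp, logisticSel]
    rw [show -ψ0 + -ψ1 * x = -(ψ0 + ψ1 * x) by ring, Real.exp_neg]
    field_simp
    ring
  have hkey : ∀ x, p x * p x * f x = P 1 1 * normalPDF μ σ2 x := by
    intro x
    have h := hcond11 x
    rw [hsel1] at h
    rw [div_eq_iff hP11pos.ne'] at h
    rw [h]; ring
  set C1 : ℝ := Real.exp (-ψ0 + -ψ1 * μ + (-ψ1)^2 * σ2 / 2) with hC1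
  set C2 : ℝ := Real.exp (-2*ψ0 + -2*ψ1 * μ + (-2*ψ1)^2 * σ2 / 2) with hC2
  set μ1 : ℝ := μ + -ψ1 * σ2 with hμ1
  set μ2 : ℝ := μ + -2*ψ1 * σ2 with hμ2
  -- pointwise identities
  have g11 : ∀ x, selWeight ψ0 ψ1 1 x * selWeight ψ0 ψ1 1 x * f x
      = P 1 1 * normalPDF μ σ2 x := by
    intro x; rw [hsel1]; exact hkey x
  have g10 : ∀ x, selWeight ψ0 ψ1 1 x * selWeight ψ0 ψ1 0 x * f x
      = (P 1 1 * C1) * normalPDF μ1 σ2 x := by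
    intro x
    rw [hsel1, hsel0, h1p x]
    calc p x * (Real.exp (-ψ0 + -ψ1 * x) * p x) * f x
        = Real.exp (-ψ0 + -ψ1 * x) * (p x * p x * f x) := by ring
      _ = Real.exp (-ψ0 + -ψ1 * x) * (P 1 1 * normalPDF μ σ2 x) := by rw [hkey]
      _ = P 1 1 * (Real.exp (-ψ0 + -ψ1 * x) * normalPDF μ σ2 x) := by ring
      _ = P 1 1 * (C1 * normalPDF μ1 σ2 x) := by
          rw [tilt_normalPDF hσ2 μ (-ψ0) (-ψ1) x]
      _ = (P 1 1 * C1) * normalPDF μ1 σ2 x := by ring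
  have g01 : ∀ x, selWeight ψ0 ψ1 0 x * selWeight ψ0 ψ1 1 x * f x
      = (P 1 1 * C1) * normalPDF μ1 σ2 x := by
    intro x
    rw [show selWeight ψ0 ψ1 0 x * selWeight ψ0 ψ1 1 x * f x
        = selWeight ψ0 ψ1 1 x * selWeight ψ0 ψ1 0 x * f x by ring]
    exact g10 x
  have g00 : ∀ x, selWeight ψ0 ψ1 0 x * selWeight ψ0 ψ1 0 x * f x
      = (P 1 1 * C2) * normalPDF μ2 σ2 x := by
    intro x
    rw [hsel0, h1p x]
    have e2 : Real.exp (-ψ0 + -ψ1 * x) * Real.exp (-ψ0 + -ψ1 * x)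
        = Real.exp (-2*ψ0 + -2*ψ1 * x) := by
      rw [← Real.exp_add]; congr 1; ring
    calc Real.exp (-ψ0 + -ψ1 * x) * p x * (Real.exp (-ψ0 + -ψ1 * x) * p x) * f x
        = (Real.exp (-ψ0 + -ψ1 * x) * Real.exp (-ψ0 + -ψ1 * x))
            * (p x * p x * f x) := by ring
      _ = Real.exp (-2*ψ0 + -2*ψ1 * x) * (P 1 1 * normalPDF μ σ2 x) := by
          rw [e2, hkey]
      _ = P 1 1 * (Real.exp (-2*ψ0 + -2*ψ1 * x) * normalPDF μ σ2 x) := by ring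
      _ = P 1 1 * (C2 * normalPDF μ2 σ2 x) := by
          rw [tilt_normalPDF hσ2 μ (-2*ψ0) (-2*ψ1) x]
      _ = (P 1 1 * C2) * normalPDF μ2 σ2 x := by ring
  -- compute the conditional means
  have hC1ne : P 1 1 * C1 ≠ 0 := by positivity
  have hC2ne : P 1 1 * C2 ≠ 0 := by positivity
  have hm11 : m 1 1 = μ := by
    have h := hm 1 1
    rw [hP 1 1] at h
    rw [h]
    exact (mean_of_tilt hσ2 hP11pos.ne' g11).2
  have hm10 : m 1 0 = μ1 := by
    have h := hm 1 0
    rw [hP 1 0] at h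
    rw [h]
    exact (mean_of_tilt hσ2 hC1ne g10).2
  have hm01 : m 0 1 = μ1 := by
    have h := hm 0 1
    rw [hP 0 1] at h
    rw [h]
    exact (mean_of_tilt hσ2 hC1ne g01).2
  have hm00 : m 0 0 = μ2 := by
    have h := hm 0 0
    rw [hP 0 0] at h
    rw [h]
    exact (mean_of_tilt hσ2 hC2ne g00).2
  rw [hm11, hm10, hm01, hm00, hμ1, hμ2]
  constructor <;> ring
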